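/- With the notation above, let L be a subset of indices such that F_L = ∩_{ℓ∈L} F_ℓ is a face of Δ_P, let x ∈ F_L, and fix j ∈ {1,...,k} with {b_{ℓj} : ℓ ∈ L} ≠ {0}. Then: (i) if there exist ℓ_0, ℓ_1 ∈ L with b_{ℓ_0 j}·b_{ℓ_1 j} < 0, then g_j(x) = 0; (ii) if b_{ℓj} ≥ 0 for all ℓ ∈ L then g_j(x) < 0, and if b_{ℓj} ≤ 0 for all ℓ ∈ L then g_j(x) > 0. -/
import Mathlib


/-- The affine forms `p_i(y) = ⟨P_i, (1,y)⟩` cut out by the rows of the Gale dual `D`. -/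
noncomputable def galeP (n k : ℕ) (D : Matrix (Fin n) (Fin (k + 1)) ℝ)
    (i : Fin n) (y : Fin k → ℝ) : ℝ :=
  D.mulVec (Fin.cons 1 y) i

/-- The Gale polynomial map
`g_j(y) = ∏_{b_{ij}>0} p_i(y)^{b_{ij}} − ∏_{b_{ij}<0} p_i(y)^{−b_{ij}}`. -/
noncomputable def galeG (n k : ℕ) (B : Matrix (Fin n) (Fin k) ℝ)
    (D : Matrix (Fin n) (Fin (k + 1)) ℝ) (j : Fin k) (y : Fin k → ℝ) : ℝ :=
  (∏ i ∈ Finset.univ.filter (fun i => 0 < B i j), galeP n k D i y ^ B i j) -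
    ∏ i ∈ Finset.univ.filter (fun i => B i j < 0), galeP n k D i y ^ (-(B i j))

/-- Lemma on the sign of `g` on faces, part (2): let `x ∈ F_L`
(so `p_ℓ(x) = 0` for `ℓ ∈ L` and `p_i(x) > 0` otherwise) and let `j` be such that
the entries `b_{ℓj}`, `ℓ ∈ L`, are not all zero. (i) If two of them have opposite
strict signs, then `g_j(x) = 0`. (ii) If they are all `≥ 0` then `g_j(x) < 0`, and
if they are all `≤ 0` then `g_j(x) > 0`. -/
theorem sign_of_g_on_face
    (n k : ℕ) (B : Matrix (Fin n) (Fin k) ℝ) (D : Matrix (Fin n) (Fin (k + 1)) ℝ)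
    (L : Finset (Fin n)) (x : Fin k → ℝ)
    (hzero : ∀ l ∈ L, galeP n k D l x = 0)
    (hpos : ∀ i, i ∉ L → 0 < galeP n k D i x)
    (j : Fin k) (hnotall : ∃ l ∈ L, B l j ≠ 0) :
    ((∃ l₀ ∈ L, ∃ l₁ ∈ L, B l₀ j * B l₁ j < 0) → galeG n k B D j x = 0) ∧
    ((∀ l ∈ L, 0 ≤ B l j) → galeG n k B D j x < 0) ∧
    ((∀ l ∈ L, B l j ≤ 0) → 0 < galeG n k B D j x) := by
  classical
  have key_pos : ∀ l ∈ L, 0 < B l j →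
      (∏ i ∈ Finset.univ.filter (fun i => 0 < B i j), galeP n k D i x ^ B i j) = 0 := by
    intro l hl hb
    apply Finset.prod_eq_zero (Finset.mem_filter.mpr ⟨Finset.mem_univ l, hb⟩)
    rw [hzero l hl, Real.zero_rpow (ne_of_gt hb)]
  have key_neg : ∀ l ∈ L, B l j < 0 →
      (∏ i ∈ Finset.univ.filter (fun i => B i j < 0), galeP n k D i x ^ (-(B i j))) = 0 := by
    intro l hl hb
    apply Finset.prod_eq_zero (Finset.mem_filter.mpr ⟨Finset.mem_univ l, hb⟩)
    rw [hzero l hl, Real.zero_rpow (by linarith)]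
  have pos_pos : (∀ l ∈ L, B l j ≤ 0) →
      0 < ∏ i ∈ Finset.univ.filter (fun i => 0 < B i j), galeP n k D i x ^ B i j := by
    intro h
    apply Finset.prod_pos
    intro i hi
    rw [Finset.mem_filter] at hi
    have hiL : i ∉ L := fun hiL => absurd hi.2 (not_lt.mpr (h i hiL))
    exact Real.rpow_pos_of_pos (hpos i hiL) _
  have neg_pos : (∀ l ∈ L, 0 ≤ B l j) →
      0 < ∏ i ∈ Finset.univ.filter (fun i => B i j < 0), galeP n k D i x ^ (-(B i j)) := by
    intro h
    apply Finset.prod_pos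
    intro i hi
    rw [Finset.mem_filter] at hi
    have hiL : i ∉ L := fun hiL => absurd hi.2 (not_lt.mpr (h i hiL))
    exact Real.rpow_pos_of_pos (hpos i hiL) _
  refine ⟨?_, ?_, ?_⟩
  · rintro ⟨l₀, hl₀, l₁, hl₁, hmul⟩
    unfold galeG
    rcases mul_neg_iff.mp hmul with ⟨h0, h1⟩ | ⟨h0, h1⟩
    · rw [key_pos l₀ hl₀ h0, key_neg l₁ hl₁ h1, sub_zero]
    · rw [key_pos l₁ hl₁ h1, key_neg l₀ hl₀ h0, sub_zero]
  · intro h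
    obtain ⟨l, hl, hb⟩ := hnotall
    have hb' : 0 < B l j := lt_of_le_of_ne (h l hl) (Ne.symm hb)
    unfold galeG
    rw [key_pos l hl hb']
    linarith [neg_pos h]
  · intro h
    obtain ⟨l, hl, hb⟩ := hnotall
    have hb' : B l j < 0 := lt_of_le_of_ne (h l hl) hb
    unfold galeG
    rw [key_neg l hl hb']
    linarith [pos_pos h]
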